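/- arXiv:1706.08027 — 7 statements merged into one kernel-verified Lean document; each statement's English description precedes it below -/
import Mathlib

section
/- For any polymatroid M, the dual is compact (i.e., (M*)* agrees with compactness: every element e of M* satisfies r*(E − e) = r*(E)), and the double dual equals the compactification: (M*)* = M^♭. Moreover λ_M = λ_{M*} = λ_{M^♭}. -/
/-- The dual rank function `r*(Y) = Σ_{e ∈ Y} r({e}) + r(E \ Y) - r(E)`. -/
def dualRank {α : Type*} [DecidableEq α] (E : Finset α) (r : Finset α → ℤ)
    (Y : Finset α) : ℤ :=
  (∑ e ∈ Y, r {e}) + r (E \ Y) - r E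

/-- The compactification rank function
`r^♭(X) = r(X) + Σ_{x ∈ X} [r(E \ {x}) - r(E)]`. -/
def flatRank {α : Type*} [DecidableEq α] (E : Finset α) (r : Finset α → ℤ)
    (X : Finset α) : ℤ :=
  r X + ∑ x ∈ X, (r (E \ {x}) - r E)

/-- For a polymatroid `M`: the dual `M*` is compact, `(M*)* = M^♭`, and
`λ_M = λ_{M*} = λ_{M^♭}`. -/
theorem dual_compact_double_dual_eq_flat {α : Type*} [DecidableEq α]
    (E : Finset α) (r : Finset α → ℤ)
    (hr0 : r ∅ = 0)
    (hmono : ∀ X Y : Finset α, X ⊆ Y → Y ⊆ E → r X ≤ r Y)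
    (hsubmod : ∀ X Y : Finset α, X ⊆ E → Y ⊆ E →
      r (X ∪ Y) + r (X ∩ Y) ≤ r X + r Y) :
    (∀ e ∈ E, dualRank E r (E \ {e}) = dualRank E r E) ∧
    (∀ X : Finset α, X ⊆ E → dualRank E (dualRank E r) X = flatRank E r X) ∧
    (∀ X : Finset α, X ⊆ E →
      r X + r (E \ X) - r E
        = dualRank E r X + dualRank E r (E \ X) - dualRank E r E ∧
      r X + r (E \ X) - r E
        = flatRank E r X + flatRank E r (E \ X) - flatRank E r E) := by
  have hdd : ∀ X : Finset α, X ⊆ E → E \ (E \ X) = X := fun X hX => by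
    rw [Finset.sdiff_sdiff_self_left, Finset.inter_eq_right.2 hX]
  have hsum : ∀ X : Finset α, X ⊆ E →
      (∑ e ∈ E \ X, r {e}) = (∑ e ∈ E, r {e}) - ∑ e ∈ X, r {e} := by
    intro X hX
    have := Finset.sum_sdiff (f := fun e => r ({e} : Finset α)) hX
    linarith
  refine ⟨?_, ?_, ?_⟩
  · intro e he
    have he' : {e} ⊆ E := Finset.singleton_subset_iff.2 he
    simp only [dualRank, hdd {e} he', hsum {e} he', Finset.sum_singleton,
      Finset.sdiff_self, hr0, Finset.sdiff_empty]
    ring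
  · intro X hX
    simp only [dualRank, flatRank, hdd X hX, hsum X hX, Finset.sum_singleton,
      Finset.sdiff_self, hr0, Finset.sdiff_empty, Finset.sum_sub_distrib,
      Finset.sum_add_distrib]
    ring
  · intro X hX
    have hEX : E \ X ⊆ E := Finset.sdiff_subset
    constructor
    · simp only [dualRank, hdd X hX, hsum X hX, Finset.sdiff_self, hr0,
        Finset.sdiff_empty]
      ring
    · have h1 := Finset.sum_sdiff (f := fun e => r (E \ {e}) - r E) hX
      simp only [flatRank, Finset.sdiff_self, hr0, Finset.sdiff_empty]
      linarith
end

section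
/- Let M be a polymatroid and (A, B, C) a partition of its ground set into possibly empty subsets, with λ(A) = 1, λ(C) = 1, and λ(B) = 2. Then ⊓(A, B) = 1. -/
/-- Let `M` be a polymatroid and `(A, B, C)` a partition of its ground set
into possibly empty parts with `λ(A) = 1`, `λ(C) = 1`, and `λ(B) = 2`.
Then `⊓(A, B) = 1`. -/
theorem localConn_eq_one_of_lambdas {α : Type*} [DecidableEq α]
    (E : Finset α) (r : Finset α → ℤ)
    (hr0 : r ∅ = 0)
    (hmono : ∀ X Y : Finset α, X ⊆ Y → Y ⊆ E → r X ≤ r Y)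
    (hsubmod : ∀ X Y : Finset α, X ⊆ E → Y ⊆ E →
      r (X ∪ Y) + r (X ∩ Y) ≤ r X + r Y)
    (A B C : Finset α) (hUnion : A ∪ B ∪ C = E)
    (hAB : Disjoint A B) (hAC : Disjoint A C) (hBC : Disjoint B C)
    (hlamA : r A + r (B ∪ C) - r E = 1)
    (hlamC : r C + r (A ∪ B) - r E = 1)
    (hlamB : r B + r (A ∪ C) - r E = 2) :
    r A + r B - r (A ∪ B) = 1 := by
  have hAE : A ⊆ E := by rw [← hUnion]; intro x hx; simp [hx]
  have hBE : B ⊆ E := by rw [← hUnion]; intro x hx; simp [hx]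
  have hCE : C ⊆ E := by rw [← hUnion]; intro x hx; simp [hx]
  have hABE : A ∪ B ⊆ E := Finset.union_subset hAE hBE
  have hBCE : B ∪ C ⊆ E := Finset.union_subset hBE hCE
  have hACi : A ∩ C = ∅ := Finset.disjoint_iff_inter_eq_empty.mp hAC
  have h1 := hsubmod A C hAE hCE
  rw [hACi, hr0] at h1
  have hU : (A ∪ B) ∪ (B ∪ C) = E := by
    rw [← hUnion]; ext x; simp only [Finset.mem_union]; tauto
  have hI : (A ∪ B) ∩ (B ∪ C) = B := by
    have hd := Finset.disjoint_left.mp hAC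
    ext x
    simp only [Finset.mem_inter, Finset.mem_union]
    constructor
    · rintro ⟨ha | hb, hb' | hc⟩
      · exact hb'
      · exact absurd hc (hd ha)
      · exact hb
      · exact hb
    · intro hb; exact ⟨Or.inr hb, Or.inl hb⟩
  have h2 := hsubmod (A ∪ B) (B ∪ C) hABE hBCE
  rw [hU, hI] at h2
  linarith
end

section
/- Let {j, k} be a prickly 3-separator of a 2-polymatroid P. Then P↓j can be obtained from P↓k by relabelling j as k; that is, for all X ⊆ E − {j, k}, r_{P↓j}(X) = r_{P↓k}(X) and r_{P↓j}(X ∪ {k}) = r_{P↓k}(X ∪ {j}) = r(X ∪ {j, k}) − 1. -/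
/-- The rank function of the compression `P↓x` of a 2-polymatroid `(E, r)`. -/
def downRank {α : Type*} [DecidableEq α] (r : Finset α → ℤ) (x : α)
    (X : Finset α) : ℤ :=
  if r {x} = 0 ∨ r X < r (X ∪ {x}) then r X else r X - 1

private lemma step_incr {α : Type*} [DecidableEq α] (E : Finset α) (r : Finset α → ℤ)
    (hsubmod : ∀ X Y : Finset α, X ⊆ E → Y ⊆ E → r (X ∪ Y) + r (X ∩ Y) ≤ r X + r Y)
    (X G : Finset α) (e : α) (hXG : X ⊆ G) (hGE : G ⊆ E) (heE : e ∈ E) (heG : e ∉ G)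
    (hguts : r (G ∪ {e}) = r G + 1) : r X + 1 ≤ r (X ∪ {e}) := by
  have hXE : X ⊆ E := hXG.trans hGE
  have hsub := hsubmod (X ∪ {e}) G
    (Finset.union_subset hXE (Finset.singleton_subset_iff.mpr heE)) hGE
  have h1 : (X ∪ {e}) ∪ G = G ∪ {e} := by
    rw [Finset.union_right_comm, Finset.union_eq_right.mpr hXG]
  have h2 : (X ∪ {e}) ∩ G = X := by
    rw [Finset.union_inter_distrib_right, Finset.inter_eq_left.mpr hXG,
      Finset.singleton_inter_of_notMem heG, Finset.union_empty]
  rw [h1, h2, hguts] at hsub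
  linarith

private lemma step_pair {α : Type*} [DecidableEq α] (E : Finset α) (r : Finset α → ℤ)
    (hsubmod : ∀ X Y : Finset α, X ⊆ E → Y ⊆ E → r (X ∪ Y) + r (X ∩ Y) ≤ r X + r Y)
    (X : Finset α) (j k : α) (hXE : X ⊆ E) (hjE : j ∈ E) (hkE : k ∈ E)
    (hjX : j ∉ X) (hkX : k ∉ X)
    (hrj : r {j} = 2) (hrjk : r ({j, k} : Finset α) = 3) :
    r (X ∪ {j, k}) ≤ r (X ∪ {j}) + 1 := by
  have hsub := hsubmod (X ∪ {j}) {j, k}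
    (Finset.union_subset hXE (Finset.singleton_subset_iff.mpr hjE))
    (Finset.insert_subset_iff.mpr ⟨hjE, Finset.singleton_subset_iff.mpr hkE⟩)
  have h1 : (X ∪ {j}) ∪ {j, k} = X ∪ {j, k} := by
    ext a
    simp only [Finset.mem_union, Finset.mem_insert, Finset.mem_singleton]
    tauto
  have h2 : (X ∪ {j}) ∩ ({j, k} : Finset α) = {j} := by
    ext a
    simp only [Finset.mem_inter, Finset.mem_union, Finset.mem_insert, Finset.mem_singleton]
    constructor
    · rintro ⟨ha | rfl, hb⟩
      · rcases hb with rfl | rfl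
        · exact absurd ha hjX
        · exact absurd ha hkX
      · rfl
    · rintro rfl
      exact ⟨Or.inr rfl, Or.inl rfl⟩
  rw [h1, h2, hrj, hrjk] at hsub
  linarith

/-- Let `{j, k}` be a prickly 3-separator of a 2-polymatroid `P`. Then `P↓j`
is obtained from `P↓k` by relabelling `j` as `k`: for all `X ⊆ E \ {j, k}`,
`r_{P↓j}(X) = r_{P↓k}(X)` and
`r_{P↓j}(X ∪ {k}) = r_{P↓k}(X ∪ {j}) = r(X ∪ {j, k}) - 1`. -/
theorem down_j_relabel_down_k {α : Type*} [DecidableEq α]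
    (E : Finset α) (r : Finset α → ℤ)
    (hr0 : r ∅ = 0)
    (hmono : ∀ X Y : Finset α, X ⊆ Y → Y ⊆ E → r X ≤ r Y)
    (hsubmod : ∀ X Y : Finset α, X ⊆ E → Y ⊆ E →
      r (X ∪ Y) + r (X ∩ Y) ≤ r X + r Y)
    (h2 : ∀ e ∈ E, r {e} ≤ 2)
    (j k : α) (hjE : j ∈ E) (hkE : k ∈ E) (hjk : j ≠ k)
    (hrj : r {j} = 2) (hrk : r {k} = 2) (hrjk : r ({j, k} : Finset α) = 3)
    (hlam : r ({j, k} : Finset α) + r (E \ {j, k}) - r E = 2)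
    (hguts_j : r ((E \ {j, k}) ∪ {j}) = r (E \ {j, k}) + 1)
    (hguts_k : r ((E \ {j, k}) ∪ {k}) = r (E \ {j, k}) + 1) :
    ∀ X : Finset α, X ⊆ E \ {j, k} →
      downRank r j X = downRank r k X ∧
      downRank r j (X ∪ {k}) = downRank r k (X ∪ {j}) ∧
      downRank r k (X ∪ {j}) = r (X ∪ {j, k}) - 1 := by
  intro X hX
  have hGE : E \ {j, k} ⊆ E := Finset.sdiff_subset
  have hXE : X ⊆ E := hX.trans hGE
  have hjX : j ∉ X := fun h => (Finset.mem_sdiff.1 (hX h)).2 (Finset.mem_insert_self j {k})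
  have hkX : k ∉ X := fun h =>
    (Finset.mem_sdiff.1 (hX h)).2 (Finset.mem_insert_of_mem (Finset.mem_singleton_self k))
  have hjG : j ∉ E \ {j, k} := fun h =>
    (Finset.mem_sdiff.1 h).2 (Finset.mem_insert_self j {k})
  have hkG : k ∉ E \ {j, k} := fun h =>
    (Finset.mem_sdiff.1 h).2 (Finset.mem_insert_of_mem (Finset.mem_singleton_self k))
  have hAj : r X + 1 ≤ r (X ∪ {j}) := step_incr E r hsubmod X _ j hX hGE hjE hjG hguts_j
  have hAk : r X + 1 ≤ r (X ∪ {k}) := step_incr E r hsubmod X _ k hX hGE hkE hkG hguts_k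
  have hBj : r (X ∪ {j, k}) ≤ r (X ∪ {j}) + 1 :=
    step_pair E r hsubmod X j k hXE hjE hkE hjX hkX hrj hrjk
  have hBk : r (X ∪ {j, k}) ≤ r (X ∪ {k}) + 1 := by
    have := step_pair E r hsubmod X k j hXE hkE hjE hkX hjX hrk
      (by rw [Finset.pair_comm]; exact hrjk)
    rwa [Finset.pair_comm k j] at this
  have hXjkE : X ∪ {j, k} ⊆ E :=
    Finset.union_subset hXE (Finset.insert_subset_iff.mpr ⟨hjE, Finset.singleton_subset_iff.mpr hkE⟩)
  have hmonoj : r (X ∪ {j}) ≤ r (X ∪ {j, k}) :=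
    hmono _ _ (Finset.union_subset_union_right
      (Finset.singleton_subset_iff.mpr (Finset.mem_insert_self j {k}))) hXjkE
  have hmonok : r (X ∪ {k}) ≤ r (X ∪ {j, k}) :=
    hmono _ _ (Finset.union_subset_union_right
      (Finset.singleton_subset_iff.mpr
        (Finset.mem_insert_of_mem (Finset.mem_singleton_self k)))) hXjkE
  have huj : (X ∪ {j}) ∪ {k} = X ∪ {j, k} := by
    ext a
    simp only [Finset.mem_union, Finset.mem_insert, Finset.mem_singleton]
    tauto
  have huk : (X ∪ {k}) ∪ {j} = X ∪ {j, k} := by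
    ext a
    simp only [Finset.mem_union, Finset.mem_insert, Finset.mem_singleton]
    tauto
  have P3 : downRank r k (X ∪ {j}) = r (X ∪ {j, k}) - 1 := by
    unfold downRank
    rw [huj]
    by_cases hcase : r (X ∪ {j}) < r (X ∪ {j, k})
    · rw [if_pos (Or.inr hcase)]; linarith
    · rw [if_neg (by push_neg; exact ⟨by rw [hrk]; norm_num, not_lt.mp hcase⟩)]
      have := not_lt.mp hcase
      linarith
  have P2 : downRank r j (X ∪ {k}) = r (X ∪ {j, k}) - 1 := by
    unfold downRank
    rw [huk]
    by_cases hcase : r (X ∪ {k}) < r (X ∪ {j, k})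
    · rw [if_pos (Or.inr hcase)]; linarith
    · rw [if_neg (by push_neg; exact ⟨by rw [hrj]; norm_num, not_lt.mp hcase⟩)]
      have := not_lt.mp hcase
      linarith
  refine ⟨?_, by rw [P2, P3], P3⟩
  unfold downRank
  rw [if_pos (Or.inr (by linarith)), if_pos (Or.inr (by linarith))]
end

section
/- Compression commutes with deletion and contraction: in a 2-polymatroid P with distinct elements k and y, one has (P↓k) \ y = (P \ y)↓k and (P↓k)/y = (P/y)↓k. -/
/-- A polymatroid presented as a pair: ground set together with a rank
function. -/
abbrev PolyPair (α : Type*) := Finset α × (Finset α → ℤ)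

/-- Deletion of an element. -/
def pmDel {α : Type*} [DecidableEq α] (M : PolyPair α) (y : α) : PolyPair α :=
  (M.1 \ {y}, M.2)

/-- Contraction of an element. -/
def pmCon {α : Type*} [DecidableEq α] (M : PolyPair α) (y : α) : PolyPair α :=
  (M.1 \ {y}, fun X => M.2 (X ∪ {y}) - M.2 {y})

/-- Compression of an element. -/
def pmDown {α : Type*} [DecidableEq α] (M : PolyPair α) (x : α) : PolyPair α :=
  (M.1 \ {x},
    fun X => if M.2 {x} = 0 ∨ M.2 X < M.2 (X ∪ {x}) then M.2 X else M.2 X - 1)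

/-- Compression commutes with deletion and contraction: in a 2-polymatroid `P`
with distinct elements `k` and `y`, `(P↓k) \ y = (P \ y)↓k` and
`(P↓k)/y = (P/y)↓k`. -/
theorem down_commutes_del_con {α : Type*} [DecidableEq α]
    (E : Finset α) (r : Finset α → ℤ)
    (hr0 : r ∅ = 0)
    (hmono : ∀ X Y : Finset α, X ⊆ Y → Y ⊆ E → r X ≤ r Y)
    (hsubmod : ∀ X Y : Finset α, X ⊆ E → Y ⊆ E →
      r (X ∪ Y) + r (X ∩ Y) ≤ r X + r Y)
    (h2 : ∀ e ∈ E, r {e} ≤ 2)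
    (k y : α) (hkE : k ∈ E) (hyE : y ∈ E) (hky : k ≠ y) :
    ((pmDel (pmDown (E, r) k) y).1 = (pmDown (pmDel (E, r) y) k).1 ∧
      ∀ X : Finset α, X ⊆ (E \ {k}) \ {y} →
        (pmDel (pmDown (E, r) k) y).2 X = (pmDown (pmDel (E, r) y) k).2 X) ∧
    ((pmCon (pmDown (E, r) k) y).1 = (pmDown (pmCon (E, r) y) k).1 ∧
      ∀ X : Finset α, X ⊆ (E \ {k}) \ {y} →
        (pmCon (pmDown (E, r) k) y).2 X = (pmDown (pmCon (E, r) y) k).2 X) := by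
  constructor
  · exact ⟨by simp only [pmDel, pmDown]; ext a; simp; tauto, fun X _ => rfl⟩
  constructor
  · simp only [pmCon, pmDown]; ext a; simp; tauto
  intro X hX
  have hXE : X ⊆ E := hX.trans (Finset.sdiff_subset.trans Finset.sdiff_subset)
  have hkX : k ∉ X := fun h => by
    have := hX h; simp [Finset.mem_sdiff] at this
  have hAE : X ∪ {y} ⊆ E := Finset.union_subset hXE (by simpa using hyE)
  have hAkE : (X ∪ {y}) ∪ {k} ⊆ E := Finset.union_subset hAE (by simpa using hkE)
  have hykE : ({y} : Finset α) ∪ {k} ⊆ E := by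
    refine Finset.union_subset ?_ ?_ <;> simp [hyE, hkE]
  have F1 : r (X ∪ {y}) ≤ r ((X ∪ {y}) ∪ {k}) :=
    hmono _ _ Finset.subset_union_left hAkE
  have F2 : r {y} ≤ r ({y} ∪ {k}) :=
    hmono _ _ Finset.subset_union_left hykE
  have F5 : (0:ℤ) ≤ r {k} := hr0 ▸ hmono ∅ {k} (Finset.empty_subset _) (by simpa using hkE)
  have F3 : r ({y} ∪ {k}) ≤ r {y} + r {k} := by
    have := hsubmod {y} {k} (by simpa using hyE) (by simpa using hkE)
    have hint : ({y} : Finset α) ∩ {k} = ∅ := by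
      ext a
      simp only [Finset.mem_inter, Finset.mem_singleton, Finset.notMem_empty,
        iff_false, not_and]
      rintro rfl h; exact hky h.symm
    rw [hint, hr0] at this; linarith
  have F4 : r ((X ∪ {y}) ∪ {k}) + r {y} ≤ r (X ∪ {y}) + r ({y} ∪ {k}) := by
    have := hsubmod (X ∪ {y}) ({y} ∪ {k}) hAE hykE
    have hu : (X ∪ {y}) ∪ ({y} ∪ {k}) = (X ∪ {y}) ∪ {k} := by
      ext a; simp only [Finset.mem_union, Finset.mem_singleton]; tauto
    have hi : (X ∪ {y}) ∩ ({y} ∪ {k}) = {y} := by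
      ext a
      simp only [Finset.mem_inter, Finset.mem_union, Finset.mem_singleton]
      constructor
      · rintro ⟨h1 | rfl, h2 | rfl⟩ <;> first | rfl | (exact h2) | (exact absurd h1 hkX) | (exact absurd rfl hky)
      · rintro rfl; exact ⟨Or.inr rfl, Or.inl rfl⟩
    rw [hu, hi] at this; linarith
  simp only [pmCon, pmDown]
  have e1 : (X ∪ {k}) ∪ {y} = (X ∪ {y}) ∪ {k} := Finset.union_right_comm _ _ _
  have e2 : ({k} : Finset α) ∪ {y} = {y} ∪ {k} := Finset.union_comm _ _
  simp only [e1, e2]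
  split_ifs <;> omega
end

section
/- Let P be a compact 2-polymatroid with a prickly 3-separator {j, k}. Then the compression P↓k is compact. -/
/-- Let `P` be a compact 2-polymatroid with a prickly 3-separator `{j, k}`.
Then the compression `P↓k` is compact. -/
theorem down_compact {α : Type*} [DecidableEq α]
    (E : Finset α) (r : Finset α → ℤ)
    (hr0 : r ∅ = 0)
    (hmono : ∀ X Y : Finset α, X ⊆ Y → Y ⊆ E → r X ≤ r Y)
    (hsubmod : ∀ X Y : Finset α, X ⊆ E → Y ⊆ E →
      r (X ∪ Y) + r (X ∩ Y) ≤ r X + r Y)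
    (h2 : ∀ e ∈ E, r {e} ≤ 2)
    (hcompact : ∀ e ∈ E, r (E \ {e}) = r E)
    (j k : α) (hjE : j ∈ E) (hkE : k ∈ E) (hjk : j ≠ k)
    (hrj : r {j} = 2) (hrk : r {k} = 2) (hrjk : r ({j, k} : Finset α) = 3)
    (hlam : r ({j, k} : Finset α) + r (E \ {j, k}) - r E = 2)
    (hguts_j : r ((E \ {j, k}) ∪ {j}) = r (E \ {j, k}) + 1)
    (hguts_k : r ((E \ {j, k}) ∪ {k}) = r (E \ {j, k}) + 1) :
    ∀ e ∈ E \ {k},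
      downRank r k ((E \ {k}) \ {e}) = downRank r k (E \ {k}) := by
  intro e he
  simp only [Finset.mem_sdiff, Finset.mem_singleton] at he
  obtain ⟨heE, hek⟩ := he
  have hE1 : (E \ {k}) ∪ {k} = E := by
    ext a; simp only [Finset.mem_union, Finset.mem_sdiff, Finset.mem_singleton]
    constructor
    · rintro (⟨h, _⟩ | rfl) <;> [exact h; exact hkE]
    · intro h; by_cases hak : a = k <;> tauto
  have hrEk : r (E \ {k}) = r E := hcompact k hkE
  have hRHS : downRank r k (E \ {k}) = r E - 1 := by
    unfold downRank
    rw [hE1, hrEk]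
    simp [hrk]
  rw [hRHS]
  set X := (E \ {k}) \ {e} with hX
  have hXk : X ∪ {k} = E \ {e} := by
    ext a
    simp only [hX, Finset.mem_union, Finset.mem_sdiff, Finset.mem_singleton]
    constructor
    · rintro (⟨⟨h1, _⟩, h2⟩ | rfl)
      · exact ⟨h1, h2⟩
      · exact ⟨hkE, fun h => hek h.symm⟩
    · intro ⟨h1, h2⟩; by_cases hak : a = k <;> tauto
  have hrXk : r (X ∪ {k}) = r E := by rw [hXk]; exact hcompact e heE
  have hXE : X ⊆ E := by
    intro a ha
    simp only [hX, Finset.mem_sdiff, Finset.mem_singleton] at ha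
    exact ha.1.1
  have hmX : r X ≤ r E := by
    have := hmono X (X ∪ {k}) Finset.subset_union_left
      (by rw [hXk]; exact Finset.sdiff_subset)
    omega
  have hlow : r E - 1 ≤ r X := by
    by_cases hej : e = j
    · have hXeq : X = E \ {j, k} := by
        ext a
        simp only [hX, hej, Finset.mem_sdiff, Finset.mem_singleton,
          Finset.mem_insert]
        tauto
      rw [hXeq]; omega
    · have hjX : j ∈ X := by
        simp only [hX, Finset.mem_sdiff, Finset.mem_singleton]
        exact ⟨⟨hjE, hjk⟩, fun h => hej h.symm⟩
      have hsub := hsubmod X {j, k} hXE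
        (by intro a ha
            simp only [Finset.mem_insert, Finset.mem_singleton] at ha
            rcases ha with rfl | rfl <;> assumption)
      have h1 : X ∪ {j, k} = E \ {e} := by
        ext a
        simp only [hX, Finset.mem_union, Finset.mem_sdiff, Finset.mem_singleton,
          Finset.mem_insert]
        constructor
        · rintro (⟨⟨h1, _⟩, h2⟩ | rfl | rfl)
          · exact ⟨h1, h2⟩
          · exact ⟨hjE, fun h => hej h.symm⟩
          · exact ⟨hkE, fun h => hek h.symm⟩
        · intro ⟨h1, h2⟩; by_cases hak : a = k <;> tauto
      have h2' : X ∩ {j, k} = {j} := by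
        ext a
        simp only [hX, Finset.mem_inter, Finset.mem_sdiff, Finset.mem_singleton,
          Finset.mem_insert]
        constructor
        · rintro ⟨⟨⟨_, hak⟩, _⟩, rfl | rfl⟩
          · rfl
          · exact absurd rfl hak
        · rintro rfl
          exact ⟨⟨⟨hjE, hjk⟩, fun h => hej h.symm⟩, Or.inl rfl⟩
      rw [h1, h2', hcompact e heE, hrjk, hrj] at hsub
      omega
  unfold downRank
  rw [hrXk]
  split_ifs with h
  · rcases h with h | h
    · rw [h] at hrk; omega
    · omega
  · push_neg at h
    omega
end

section
/- A 2-element set {j, k} is a prickly 3-separator of a 2-polymatroid M if and only if it is a prickly 3-separator of the dual M*. -/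
/-- `{j, k}` is a prickly 3-separator of the 2-polymatroid with ground set `E`
and rank function `r`. -/
def Prickly {α : Type*} [DecidableEq α] (E : Finset α) (r : Finset α → ℤ)
    (j k : α) : Prop :=
  j ≠ k ∧ j ∈ E ∧ k ∈ E ∧
  r {j} = 2 ∧ r {k} = 2 ∧ r ({j, k} : Finset α) = 3 ∧
  r ({j, k} : Finset α) + r (E \ {j, k}) - r E = 2 ∧
  r ((E \ {j, k}) ∪ {j}) = r (E \ {j, k}) + 1 ∧
  r ((E \ {j, k}) ∪ {k}) = r (E \ {j, k}) + 1

lemma prickly_dual_aux {α : Type*} [DecidableEq α]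
    (E : Finset α) (r : Finset α → ℤ) (hr0 : r ∅ = 0) (j k : α)
    (hjk : j ≠ k) (hj : j ∈ E) (hk : k ∈ E) :
    dualRank E r {j} = r {j} + r ((E \ {j, k}) ∪ {k}) - r E ∧
    dualRank E r {k} = r {k} + r ((E \ {j, k}) ∪ {j}) - r E ∧
    dualRank E r {j, k} = r {j} + r {k} + r (E \ {j, k}) - r E ∧
    dualRank E r (E \ {j, k}) =
      (∑ e ∈ E, r {e}) - r {j} - r {k} + r {j, k} - r E ∧
    dualRank E r ((E \ {j, k}) ∪ {j}) = (∑ e ∈ E, r {e}) - r E ∧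
    dualRank E r ((E \ {j, k}) ∪ {k}) = (∑ e ∈ E, r {e}) - r E ∧
    dualRank E r E = (∑ e ∈ E, r {e}) - r E := by
  have hZE : ({j, k} : Finset α) ⊆ E := by
    intro a ha
    simp only [Finset.mem_insert, Finset.mem_singleton] at ha
    rcases ha with rfl | rfl <;> assumption
  have hEj : E \ {j} = (E \ {j, k}) ∪ {k} := by
    ext a
    simp only [Finset.mem_sdiff, Finset.mem_union, Finset.mem_insert,
      Finset.mem_singleton]
    constructor
    · rintro ⟨ha, haj⟩
      by_cases hak : a = k
      · exact Or.inr hak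
      · exact Or.inl ⟨ha, by tauto⟩
    · rintro (⟨ha, h⟩ | rfl)
      · exact ⟨ha, by tauto⟩
      · exact ⟨hk, fun h => hjk h.symm⟩
  have hEk : E \ {k} = (E \ {j, k}) ∪ {j} := by
    ext a
    simp only [Finset.mem_sdiff, Finset.mem_union, Finset.mem_insert,
      Finset.mem_singleton]
    constructor
    · rintro ⟨ha, hak⟩
      by_cases haj : a = j
      · exact Or.inr haj
      · exact Or.inl ⟨ha, by tauto⟩
    · rintro (⟨ha, h⟩ | rfl)
      · exact ⟨ha, by tauto⟩
      · exact ⟨hj, hjk⟩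
  have hEZ : E \ (E \ {j, k}) = {j, k} := by
    rw [Finset.sdiff_sdiff_self_left, Finset.inter_eq_right.mpr hZE]
  have hEZj : E \ ((E \ {j, k}) ∪ {j}) = {k} := by
    rw [Finset.sdiff_union_distrib, hEZ, hEj]
    ext a
    simp only [Finset.mem_inter, Finset.mem_union, Finset.mem_sdiff,
      Finset.mem_insert, Finset.mem_singleton]
    constructor
    · rintro ⟨rfl | rfl, h⟩ <;> tauto
    · rintro rfl
      exact ⟨Or.inr rfl, Or.inr rfl⟩
  have hEZk : E \ ((E \ {j, k}) ∪ {k}) = {j} := by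
    rw [Finset.sdiff_union_distrib, hEZ, hEk]
    ext a
    simp only [Finset.mem_inter, Finset.mem_union, Finset.mem_sdiff,
      Finset.mem_insert, Finset.mem_singleton]
    constructor
    · rintro ⟨rfl | rfl, h⟩ <;> tauto
    · rintro rfl
      exact ⟨Or.inl rfl, Or.inr rfl⟩
  have hsumZ : (∑ e ∈ ({j, k} : Finset α), r {e}) = r {j} + r {k} :=
    Finset.sum_pair hjk
  have hsumEZ : (∑ e ∈ E \ {j, k}, r {e})
      = (∑ e ∈ E, r {e}) - (r {j} + r {k}) := by
    rw [Finset.sum_sdiff_eq_sub hZE, hsumZ]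
  have hjEZ : j ∉ E \ ({j, k} : Finset α) := by simp
  have hkEZ : k ∉ E \ ({j, k} : Finset α) := by simp
  have hsumEZj : (∑ e ∈ (E \ {j, k}) ∪ {j}, r {e})
      = (∑ e ∈ E, r {e}) - (r {j} + r {k}) + r {j} := by
    rw [Finset.sum_union (by simpa using hjEZ), hsumEZ, Finset.sum_singleton]
  have hsumEZk : (∑ e ∈ (E \ {j, k}) ∪ {k}, r {e})
      = (∑ e ∈ E, r {e}) - (r {j} + r {k}) + r {k} := by
    rw [Finset.sum_union (by simpa using hkEZ), hsumEZ, Finset.sum_singleton]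
  refine ⟨?_, ?_, ?_, ?_, ?_, ?_, ?_⟩ <;>
    simp only [dualRank, hEj, hEk, hEZ, hEZj, hEZk, hsumZ, hsumEZ, hsumEZj,
      hsumEZk, Finset.sum_singleton, Finset.sdiff_self, hr0] <;> ring

/-- A 2-element set `{j, k}` is a prickly 3-separator of a 2-polymatroid `M`
if and only if it is a prickly 3-separator of the dual `M*`. -/
theorem prickly_iff_prickly_dual {α : Type*} [DecidableEq α]
    (E : Finset α) (r : Finset α → ℤ)
    (hr0 : r ∅ = 0)
    (hmono : ∀ X Y : Finset α, X ⊆ Y → Y ⊆ E → r X ≤ r Y)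
    (hsubmod : ∀ X Y : Finset α, X ⊆ E → Y ⊆ E →
      r (X ∪ Y) + r (X ∩ Y) ≤ r X + r Y)
    (h2 : ∀ e ∈ E, r {e} ≤ 2)
    (j k : α) :
    Prickly E r j k ↔ Prickly E (dualRank E r) j k := by
  constructor
  · rintro ⟨hjk, hj, hk, e1, e2, e3, e4, e5, e6⟩
    obtain ⟨d1, d2, d3, d4, d5, d6, d7⟩ :=
      prickly_dual_aux E r hr0 j k hjk hj hk
    refine ⟨hjk, hj, hk, ?_, ?_, ?_, ?_, ?_, ?_⟩ <;>
      simp only [d1, d2, d3, d4, d5, d6, d7] <;> linarith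
  · rintro ⟨hjk, hj, hk, e1, e2, e3, e4, e5, e6⟩
    obtain ⟨d1, d2, d3, d4, d5, d6, d7⟩ :=
      prickly_dual_aux E r hr0 j k hjk hj hk
    rw [d1] at e1
    rw [d2] at e2
    rw [d3] at e3
    rw [d3, d4, d7] at e4
    rw [d5, d4] at e5
    rw [d6, d4] at e6
    -- monotonicity facts
    have mj : r ((E \ {j, k}) ∪ {k}) ≤ r E := by
      apply hmono _ _ _ (le_refl E)
      intro a ha
      rcases Finset.mem_union.mp ha with h | h
      · exact (Finset.mem_sdiff.mp h).1
      · rw [Finset.mem_singleton.mp h]; exact hk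
    have mk : r ((E \ {j, k}) ∪ {j}) ≤ r E := by
      apply hmono _ _ _ (le_refl E)
      intro a ha
      rcases Finset.mem_union.mp ha with h | h
      · exact (Finset.mem_sdiff.mp h).1
      · rw [Finset.mem_singleton.mp h]; exact hj
    have h2j : r {j} ≤ 2 := h2 j hj
    have h2k : r {k} ≤ 2 := h2 k hk
    have hrj : r {j} = 2 := by linarith
    have hrk : r {k} = 2 := by linarith
    have hrZ : r ({j, k} : Finset α) = 3 := by linarith
    refine ⟨hjk, hj, hk, hrj, hrk, hrZ, by linarith, by linarith, by linarith⟩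
end

section
/- Let {j, k} be a prickly 3-separator in a 2-polymatroid P. Then (P↓k) \ j = P \ {j, k} and (P↓k)/j = P/{j, k}; that is, for all X ⊆ E − {j, k}, r_{P↓k \ j}(X) = r(X) and r_{P↓k / j}(X) = r(X ∪ {j, k}) − 3. -/
/-- Let `{j, k}` be a prickly 3-separator of a 2-polymatroid `P`. Then
`(P↓k) \ j = P \ {j, k}` and `(P↓k)/j = P/{j, k}`: for all `X ⊆ E \ {j, k}`,
`r_{P↓k \ j}(X) = r(X)` and `r_{P↓k / j}(X) = r(X ∪ {j, k}) - 3`. -/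
theorem down_del_con_of_prickly {α : Type*} [DecidableEq α]
    (E : Finset α) (r : Finset α → ℤ)
    (hr0 : r ∅ = 0)
    (hmono : ∀ X Y : Finset α, X ⊆ Y → Y ⊆ E → r X ≤ r Y)
    (hsubmod : ∀ X Y : Finset α, X ⊆ E → Y ⊆ E →
      r (X ∪ Y) + r (X ∩ Y) ≤ r X + r Y)
    (h2 : ∀ e ∈ E, r {e} ≤ 2)
    (j k : α) (hjE : j ∈ E) (hkE : k ∈ E) (hjk : j ≠ k)
    (hrj : r {j} = 2) (hrk : r {k} = 2) (hrjk : r ({j, k} : Finset α) = 3)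
    (hlam : r ({j, k} : Finset α) + r (E \ {j, k}) - r E = 2)
    (hguts_j : r ((E \ {j, k}) ∪ {j}) = r (E \ {j, k}) + 1)
    (hguts_k : r ((E \ {j, k}) ∪ {k}) = r (E \ {j, k}) + 1) :
    ∀ X : Finset α, X ⊆ E \ {j, k} →
      downRank r k X = r X ∧
      downRank r k (X ∪ {j}) - downRank r k {j} = r (X ∪ {j, k}) - 3 := by
  intro X hX
  have hkne : r {k} ≠ 0 := by omega
  have hjX : j ∉ X := fun h => by
    have := hX h; simp [Finset.mem_sdiff] at this
  have hkX : k ∉ X := fun h => by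
    have := hX h; simp [Finset.mem_sdiff] at this
  have hXE : X ⊆ E := hX.trans (Finset.sdiff_subset)
  have hXkE : X ∪ {k} ⊆ E := Finset.union_subset hXE (by simp [hkE])
  have hXjE : X ∪ {j} ⊆ E := Finset.union_subset hXE (by simp [hjE])
  have hXjkE : X ∪ {j, k} ⊆ E := Finset.union_subset hXE (by
    intro x hx; simp at hx; rcases hx with rfl | rfl <;> assumption)
  have hDE : E \ {j, k} ⊆ E := Finset.sdiff_subset
  -- set identities
  have hu1 : (X ∪ {k}) ∪ (E \ {j, k}) = (E \ {j, k}) ∪ {k} := by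
    ext x
    simp only [Finset.mem_union, Finset.mem_sdiff, Finset.mem_singleton,
      Finset.mem_insert]
    constructor
    · rintro ((h | rfl) | h)
      · exact Or.inl (by simpa using hX h)
      · exact Or.inr rfl
      · exact Or.inl h
    · rintro (h | rfl)
      · exact Or.inr h
      · exact Or.inl (Or.inr rfl)
  have hi1 : (X ∪ {k}) ∩ (E \ {j, k}) = X := by
    ext x
    simp only [Finset.mem_inter, Finset.mem_union, Finset.mem_sdiff,
      Finset.mem_singleton, Finset.mem_insert]
    constructor
    · rintro ⟨h | rfl, h2'⟩
      · exact h
      · exact absurd (Or.inr rfl) h2'.2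
    · intro h
      have := hX h
      simp only [Finset.mem_sdiff, Finset.mem_insert, Finset.mem_singleton] at this
      exact ⟨Or.inl h, this⟩
  -- step 1 : r X < r (X ∪ {k})
  have hstep1 : r X < r (X ∪ {k}) := by
    have hsm := hsubmod (X ∪ {k}) (E \ {j, k}) hXkE hDE
    rw [hu1, hi1, hguts_k] at hsm
    omega
  have hfirst : downRank r k X = r X := by
    rw [downRank, if_pos (Or.inr hstep1)]
  refine ⟨hfirst, ?_⟩
  -- downRank r k {j} = 2
  have hjkset : ({j} : Finset α) ∪ {k} = {j, k} := by
    ext x; simp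
  have hdj : downRank r k {j} = 2 := by
    rw [downRank, hjkset, if_pos (Or.inr (by omega))]
    exact hrj
  -- r (X ∪ {j}) ≤ r (X ∪ {j, k}) ≤ r (X ∪ {j}) + 1
  have hXjk : (X ∪ {j}) ∪ {k} = X ∪ {j, k} := by
    ext x; simp only [Finset.mem_union, Finset.mem_singleton, Finset.mem_insert]
    tauto
  have hmono1 : r (X ∪ {j}) ≤ r (X ∪ {j, k}) := by
    apply hmono _ _ _ hXjkE
    rw [← hXjk]; exact Finset.subset_union_left
  have hub : r (X ∪ {j, k}) ≤ r (X ∪ {j}) + 1 := by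
    have hjkE' : ({j, k} : Finset α) ⊆ E := by
      intro x hx; simp at hx; rcases hx with rfl | rfl <;> assumption
    have hsm := hsubmod (X ∪ {j}) ({j, k}) hXjE hjkE'
    have hu : (X ∪ {j}) ∪ {j, k} = X ∪ {j, k} := by
      ext x; simp only [Finset.mem_union, Finset.mem_singleton, Finset.mem_insert]
      tauto
    have hi : (X ∪ {j}) ∩ {j, k} = {j} := by
      ext x
      simp only [Finset.mem_inter, Finset.mem_union, Finset.mem_singleton,
        Finset.mem_insert]
      constructor
      · rintro ⟨h1, rfl | rfl⟩
        · rfl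
        · rcases h1 with h1 | h1
          · exact absurd h1 hkX
          · exact absurd h1.symm hjk
      · rintro rfl; exact ⟨Or.inr rfl, Or.inl rfl⟩
    rw [hu, hi, hrjk, hrj] at hsm
    omega
  rw [hdj, downRank, hXjk]
  by_cases hc : r (X ∪ {j}) < r (X ∪ {j, k})
  · rw [if_pos (Or.inr hc)]; omega
  · rw [if_neg (by push_neg; exact ⟨hkne, by omega⟩)]; omega
end
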